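/- Let 0 < α < 1, and let m, g, C, ρ, A, σ > 0. Set V = √(2mg/(CρA)) and c = (√2·σ^{1−α}/(2αm))·√(g·C·ρ·A·m), and define v(t) = V·tanh(c·(α + t^α)) for t > 0 and p_h(t) = t^{1−α}·σ^{α−1}·cosh²(c·(α + t^α)). Then for every t > 0, v is differentiable and m·p_h(t)·v′(t) = m·g; moreover, lim_{t→∞} v(t) = V = √(2mg/(CρA)), so the terminal velocity equals that of the classical resisted-fall equation m·v′ = mg − (CρA/2)·v². -/

import Mathlib

open Filter Topology Set

lemma my_hasDerivAt_tanh (x : ℝ) :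
    HasDerivAt Real.tanh (1 / Real.cosh x ^ 2) x := by
  have hcosh : Real.cosh x ≠ 0 := ne_of_gt (Real.cosh_pos x)
  have h := (Real.hasDerivAt_sinh x).div (Real.hasDerivAt_cosh x) hcosh
  have heq : (Real.cosh x * Real.cosh x - Real.sinh x * Real.sinh x) / Real.cosh x ^ 2
      = 1 / Real.cosh x ^ 2 := by
    have := Real.cosh_sq_sub_sinh_sq x
    rw [show Real.cosh x * Real.cosh x - Real.sinh x * Real.sinh x
        = Real.cosh x ^ 2 - Real.sinh x ^ 2 by ring, this]
  have h2 : (Real.sinh / Real.cosh) = Real.tanh := by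
    funext y; rw [Pi.div_apply, Real.tanh_eq_sinh_div_cosh]
  rw [heq, h2] at h
  exact h

lemma my_tanh_eq (x : ℝ) : Real.tanh x = 1 - 2 / (Real.exp (2 * x) + 1) := by
  have h1 : Real.exp (2 * x) = Real.exp x * Real.exp x := by
    rw [two_mul, Real.exp_add]
  have he : Real.exp x ≠ 0 := Real.exp_ne_zero x
  have hd : Real.exp (2 * x) + 1 ≠ 0 := by positivity
  rw [Real.tanh_eq_sinh_div_cosh, Real.sinh_eq, Real.cosh_eq, Real.exp_neg]
  rw [h1] at hd ⊢
  field_simp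
  ring

lemma my_tendsto_tanh : Tendsto Real.tanh atTop (𝓝 1) := by
  have h : Tendsto (fun x : ℝ => 1 - 2 / (Real.exp (2 * x) + 1)) atTop (𝓝 1) := by
    have h1 : Tendsto (fun x : ℝ => Real.exp (2 * x) + 1) atTop atTop :=
      (Real.tendsto_exp_atTop.comp (tendsto_id.const_mul_atTop two_pos)).atTop_add
        tendsto_const_nhds
    have h2 : Tendsto (fun x : ℝ => 2 / (Real.exp (2 * x) + 1)) atTop (𝓝 0) :=
      Tendsto.div_atTop tendsto_const_nhds h1
    simpa using tendsto_const_nhds.sub h2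
  refine h.congr fun x => ?_
  rw [my_tanh_eq]

/-- Let `0 < α < 1` and `m, g, C, ρ, A, σ > 0`. With
`V = √(2mg/(CρA))`, `c = (√2·σ^{1-α}/(2αm))·√(g·C·ρ·A·m)`,
`v t = V·tanh(c·(α + t^α))` and `ph t = t^{1-α}·σ^{α-1}·cosh²(c·(α + t^α))`, the function
`v` is differentiable on `t > 0` and satisfies the fractional equation of motion
`m · ph t · v' t = m · g`; moreover `v t → V = √(2mg/(CρA))` as `t → ∞`, so the terminal
velocity equals that of the classical resisted-fall equation `m·v' = mg - (CρA/2)·v²`. -/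
theorem fractional_resisted_fall
    (α m g C ρ A σ : ℝ) (hα0 : 0 < α) (hα1 : α < 1)
    (hm : 0 < m) (hg : 0 < g) (hC : 0 < C) (hρ : 0 < ρ) (hA : 0 < A) (hσ : 0 < σ)
    (V c : ℝ)
    (hV : V = Real.sqrt (2 * m * g / (C * ρ * A)))
    (hc : c = Real.sqrt 2 * σ ^ (1 - α) / (2 * α * m) * Real.sqrt (g * C * ρ * A * m))
    (v ph : ℝ → ℝ)
    (hv : ∀ t : ℝ, 0 < t → v t = V * Real.tanh (c * (α + t ^ α)))
    (hph : ∀ t : ℝ, 0 < t →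
      ph t = t ^ (1 - α) * σ ^ (α - 1) * Real.cosh (c * (α + t ^ α)) ^ 2) :
    (∃ v' : ℝ → ℝ, (∀ t : ℝ, 0 < t → HasDerivAt v (v' t) t) ∧
      ∀ t : ℝ, 0 < t → m * ph t * v' t = m * g) ∧
    Tendsto v atTop (𝓝 V) := by
  have hc0 : 0 < c := by
    rw [hc]
    have h1 : 0 < Real.sqrt 2 := Real.sqrt_pos.mpr two_pos
    have h2 : 0 < σ ^ (1 - α) := Real.rpow_pos_of_pos hσ _
    have h3 : 0 < Real.sqrt (g * C * ρ * A * m) := Real.sqrt_pos.mpr (by positivity)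
    positivity
  -- key algebraic identity: V * c * α * σ^(α-1) = g
  have key : V * c * α * σ ^ (α - 1) = g := by
    rw [hV, hc]
    have hσ1 : σ ^ (1 - α) * σ ^ (α - 1) = 1 := by
      rw [← Real.rpow_add hσ]; norm_num
    have h1 : Real.sqrt (2 * m * g / (C * ρ * A)) * Real.sqrt (g * C * ρ * A * m)
        = Real.sqrt (2 * m * g / (C * ρ * A) * (g * C * ρ * A * m)) :=
      (Real.sqrt_mul (by positivity) _).symm
    have h2 : 2 * m * g / (C * ρ * A) * (g * C * ρ * A * m) = (m * g) ^ 2 * 2 := by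
      field_simp
    have h3 : Real.sqrt ((m * g) ^ 2 * 2) = m * g * Real.sqrt 2 := by
      rw [Real.sqrt_mul (by positivity), Real.sqrt_sq (by positivity)]
    have h4 : Real.sqrt 2 * Real.sqrt 2 = 2 := Real.mul_self_sqrt (by norm_num)
    have hg2 : Real.sqrt g * Real.sqrt g = g := Real.mul_self_sqrt hg.le
    have hm2 : Real.sqrt m * Real.sqrt m = m := Real.mul_self_sqrt hm.le
    field_simp
    rw [show m * g * C * ρ * A = g * C * ρ * A * m by ring]
    calc _ = (Real.sqrt (2 * m * g / (C * ρ * A)) * Real.sqrt (g * C * ρ * A * m)) *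
            Real.sqrt 2 * (σ ^ (1 - α) * σ ^ (α - 1)) := by ring
      _ = 2 * m * g := by
          rw [h1, h2, h3, hσ1]; linear_combination (m * g) * h4
  constructor
  · refine ⟨fun t => V * c * α * t ^ (α - 1) / Real.cosh (c * (α + t ^ α)) ^ 2,
      fun t ht => ?_, fun t ht => ?_⟩
    · -- derivative
      have hrpow : HasDerivAt (fun x : ℝ => x ^ α) (α * t ^ (α - 1)) t :=
        Real.hasDerivAt_rpow_const (Or.inl (ne_of_gt ht))
      have hinner : HasDerivAt (fun x : ℝ => c * (α + x ^ α)) (c * (α * t ^ (α - 1))) t := by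
        simpa using ((hasDerivAt_const t α).add hrpow).const_mul c
      have htanh : HasDerivAt (fun x : ℝ => V * Real.tanh (c * (α + x ^ α)))
          (V * (1 / Real.cosh (c * (α + t ^ α)) ^ 2 * (c * (α * t ^ (α - 1))))) t :=
        ((my_hasDerivAt_tanh _).comp t hinner).const_mul V
      have heq : V * (1 / Real.cosh (c * (α + t ^ α)) ^ 2 * (c * (α * t ^ (α - 1))))
          = V * c * α * t ^ (α - 1) / Real.cosh (c * (α + t ^ α)) ^ 2 := by ring
      rw [heq] at htanh
      refine htanh.congr_of_eventuallyEq ?_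
      filter_upwards [eventually_gt_nhds ht] with x hx using (hv x hx)
    · -- the equation of motion
      rw [hph t ht]
      have hcosh : Real.cosh (c * (α + t ^ α)) ^ 2 ≠ 0 := by positivity
      have ht1 : t ^ (1 - α) * t ^ (α - 1) = 1 := by
        rw [← Real.rpow_add ht]; norm_num
      field_simp
      calc _ = (t ^ (1 - α) * t ^ (α - 1)) * (V * c * α * σ ^ (α - 1)) := by ring
        _ = g := by rw [ht1, key]; ring
  · -- limit
    have harg : Tendsto (fun t : ℝ => c * (α + t ^ α)) atTop atTop := by
      have h1 : Tendsto (fun t : ℝ => t ^ α) atTop atTop := tendsto_rpow_atTop hα0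
      exact (tendsto_atTop_add_const_left atTop α h1).const_mul_atTop hc0
    have h2 : Tendsto (fun t : ℝ => V * Real.tanh (c * (α + t ^ α))) atTop (𝓝 (V * 1)) :=
      (my_tendsto_tanh.comp harg).const_mul V
    rw [mul_one] at h2
    refine h2.congr' ?_
    filter_upwards [eventually_gt_atTop 0] with t ht using (hv t ht).symm
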